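/- Let 1 < p ≤ 2 and let u : ℝ^n × (0,∞) → ℂ be measurable with 𝒜₂(t·u) ∈ L^p(ℝ^n), where (t·u)(y,t) = t u(y,t) and 𝒜₂ is the Lusin area integral of aperture 1. Suppose also that for every x ∈ ℝ^n, every τ > 0 and a suitable constant c ≥ 1, ∫_{|y−x|<cτ/2} ∫_{cτ}^{2cτ} |u(y,t)|² dt dy ≤ C₀ τ^{n−1} (𝒜₂(t·u)(x))². Then for every σ > 0, ∫_{ℝ^n} ∫_σ^∞ |u(y,t)|² dt dy ≤ C σ^{n − 1 − 2n/p} ‖𝒜₂(t·u)‖_{L^p(ℝ^n)}², with C depending only on n, p, c, C₀. -/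

import Mathlib

open MeasureTheory Set ENNReal

/-- The Lusin area integral `𝒜₂(t·u)` of aperture 1. -/
noncomputable def lusinTA2 (n : ℕ) (u : EuclideanSpace ℝ (Fin n) × ℝ → ℂ)
    (x : EuclideanSpace ℝ (Fin n)) : ℝ≥0∞ :=
  (∫⁻ p in {p : EuclideanSpace ℝ (Fin n) × ℝ | dist x p.1 < p.2 ∧ 0 < p.2},
      ENNReal.ofReal (p.2 ^ 2 * ‖u p‖ ^ 2) / ENNReal.ofReal (p.2 ^ (n + 1))) ^ (1 / 2 : ℝ)

/-- `ℓ¹ ⊆ ℓʳ`-type inequality: for `r ≥ 1`, `∑ aᵢʳ ≤ (∑ aᵢ)ʳ` in `ℝ≥0∞`. -/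
lemma aux_tsum_rpow {ι : Type*} [Countable ι] (a : ι → ℝ≥0∞) {r : ℝ} (hr : 1 ≤ r) :
    ∑' i, a i ^ r ≤ (∑' i, a i) ^ r := by
  have hr0 : 0 < r := lt_of_lt_of_le one_pos hr
  set S := ∑' i, a i with hS
  rcases eq_or_ne S ⊤ with hT | hT
  · rw [hT, ENNReal.top_rpow_of_pos hr0]; exact le_top
  rcases eq_or_ne S 0 with h0 | h0
  · have : ∀ i, a i = 0 := by
      intro i
      exact le_antisymm (h0 ▸ ENNReal.le_tsum i) (by simp)
    simp [this, ENNReal.zero_rpow_of_pos hr0, h0]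
  have key : ∀ i, a i ^ r ≤ S ^ (r - 1) * a i := by
    intro i
    rcases eq_or_ne (a i) 0 with h | h
    · simp [h, ENNReal.zero_rpow_of_pos hr0]
    have hle : a i ≤ S := ENNReal.le_tsum i
    have hne : a i ≠ ⊤ := fun ht => hT (top_le_iff.1 (ht ▸ hle))
    calc a i ^ r = a i ^ (r - 1) * a i := by
          rw [show r = (r - 1) + 1 by ring, ENNReal.rpow_add _ _ h hne,
            ENNReal.rpow_one]
          ring_nf
      _ ≤ S ^ (r - 1) * a i :=
          mul_le_mul_left (ENNReal.rpow_le_rpow hle (by linarith)) _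
  calc ∑' i, a i ^ r ≤ ∑' i, S ^ (r - 1) * a i := ENNReal.tsum_le_tsum key
    _ = S ^ (r - 1) * S := by rw [ENNReal.tsum_mul_left]
    _ = S ^ r := by
        conv_rhs => rw [show r = (r - 1) + 1 by ring]
        rw [ENNReal.rpow_add _ _ h0 hT, ENNReal.rpow_one]

/-- The single-scale bound: decomposing `ℝⁿ` into a grid of cubes of side
`s = cτ/(4(n+1))` and using the local hypothesis plus Hölder. -/
lemma scale_bound (n : ℕ) (p : ℝ) (hp1 : 1 < p) (hp2 : p ≤ 2)
    (u : EuclideanSpace ℝ (Fin n) × ℝ → ℂ)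
    (c : ℝ) (hc : 1 ≤ c) (C₀ : ℝ)
    (hloc : ∀ x : EuclideanSpace ℝ (Fin n), ∀ τ : ℝ, 0 < τ →
      (∫⁻ y in {y : EuclideanSpace ℝ (Fin n) | dist y x < c * τ / 2},
          ∫⁻ t in Set.Icc (c * τ) (2 * c * τ), ENNReal.ofReal (‖u (y, t)‖ ^ 2)) ≤
        ENNReal.ofReal C₀ * ENNReal.ofReal (τ ^ ((n : ℝ) - 1)) * (lusinTA2 n u x) ^ 2)
    (τ : ℝ) (hτ : 0 < τ) :
    (∫⁻ y, ∫⁻ t in Set.Icc (c * τ) (2 * c * τ), ENNReal.ofReal (‖u (y, t)‖ ^ 2)) ≤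
      ENNReal.ofReal C₀ * ENNReal.ofReal (τ ^ ((n : ℝ) - 1)) *
        ENNReal.ofReal ((c * τ / (4 * ((n : ℝ) + 1))) ^ (-(2 * (n : ℝ) / p))) *
        (∫⁻ x, lusinTA2 n u x ^ p) ^ (2 / p) := by
  have hp0 : 0 < p := lt_trans one_pos hp1
  have hcτ : 0 < c * τ := mul_pos (lt_of_lt_of_le one_pos hc) hτ
  set s : ℝ := c * τ / (4 * ((n : ℝ) + 1)) with hs_def
  have hn1 : (0:ℝ) < (n : ℝ) + 1 := by positivity
  have hs : 0 < s := by positivity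
  set φ := (MeasurableEquiv.toLp 2 (Fin n → ℝ)).symm with hφ
  set Q : (Fin n → ℤ) → Set (EuclideanSpace ℝ (Fin n)) := fun k =>
    φ ⁻¹' (Set.univ.pi fun i => Ico ((k i : ℝ) * s) (((k i : ℝ) + 1) * s)) with hQ
  have hQmem : ∀ k y, y ∈ Q k ↔ ∀ i, (k i : ℝ) * s ≤ φ y i ∧ φ y i < ((k i : ℝ) + 1) * s := by
    intro k y
    simp [hQ, Set.mem_pi, Set.mem_preimage, Set.mem_Ico]
  have hQfloor : ∀ k y, y ∈ Q k ↔ ∀ i, ⌊φ y i / s⌋ = k i := by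
    intro k y
    rw [hQmem]
    refine forall_congr' fun i => ?_
    rw [Int.floor_eq_iff]
    constructor
    · rintro ⟨h1, h2⟩
      exact ⟨(le_div_iff₀ hs).2 (by linarith), (div_lt_iff₀ hs).2 (by linarith)⟩
    · rintro ⟨h1, h2⟩
      have := (le_div_iff₀ hs).1 h1
      have := (div_lt_iff₀ hs).1 h2
      constructor <;> linarith
  have hQmeas : ∀ k, MeasurableSet (Q k) := by
    intro k
    exact φ.measurable (MeasurableSet.univ_pi fun i => measurableSet_Ico)
  have hQdisj : Pairwise (Function.onFun Disjoint Q) := by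
    intro k k' hkk'
    rw [Function.onFun, Set.disjoint_left]
    intro y hy hy'
    apply hkk'
    funext i
    rw [← (hQfloor k y).1 hy i, ← (hQfloor k' y).1 hy' i]
  have hQcover : (⋃ k, Q k) = Set.univ := by
    ext y
    simp only [Set.mem_iUnion, Set.mem_univ, iff_true]
    exact ⟨fun i => ⌊φ y i / s⌋, (hQfloor _ y).2 fun i => rfl⟩
  have hQvol : ∀ k, volume (Q k) = ENNReal.ofReal (s ^ n) := by
    intro k
    rw [hQ]
    rw [(EuclideanSpace.volume_preserving_symm_measurableEquiv_toLp (Fin n)).measure_preimage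
      ((MeasurableSet.univ_pi fun i => measurableSet_Ico).nullMeasurableSet)]
    rw [volume_pi_pi]
    have : ∀ i : Fin n, volume (Ico ((k i : ℝ) * s) (((k i : ℝ) + 1) * s))
        = ENNReal.ofReal s := by
      intro i; rw [Real.volume_Ico]; ring_nf
    simp only [this, Finset.prod_const, Finset.card_univ, Fintype.card_fin]
    rw [ENNReal.ofReal_pow hs.le]
  -- small diameter
  have hdiam : ∀ k, ∀ x ∈ Q k, ∀ y ∈ Q k, dist y x < c * τ / 2 := by
    intro k x hx y hy
    have hcoord : ∀ i, dist (y i) (x i) ^ 2 ≤ s ^ 2 := by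
      intro i
      have h1 : (k i : ℝ) * s ≤ x i ∧ x i < ((k i : ℝ) + 1) * s := (hQmem k x).1 hx i
      have h2 : (k i : ℝ) * s ≤ y i ∧ y i < ((k i : ℝ) + 1) * s := (hQmem k y).1 hy i
      have : |y i - x i| ≤ s := by
        rw [abs_sub_le_iff]
        constructor <;> nlinarith [h1.1, h1.2, h2.1, h2.2]
      have habs : dist (y i) (x i) = |y i - x i| := rfl
      rw [habs]
      nlinarith [abs_nonneg (y i - x i)]
    have hsum : (∑ i, dist (y i) (x i) ^ 2) ≤ (n : ℝ) * s ^ 2 := by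
      calc (∑ i, dist (y i) (x i) ^ 2) ≤ ∑ _i : Fin n, s ^ 2 :=
            Finset.sum_le_sum fun i _ => hcoord i
        _ = (n : ℝ) * s ^ 2 := by simp [Finset.sum_const, Finset.card_univ]
    have hdle : dist y x ≤ Real.sqrt ((n : ℝ) * s ^ 2) := by
      rw [EuclideanSpace.dist_eq]
      exact Real.sqrt_le_sqrt hsum
    have hsq : Real.sqrt ((n : ℝ) * s ^ 2) = Real.sqrt (n : ℝ) * s := by
      rw [Real.sqrt_mul (Nat.cast_nonneg n), Real.sqrt_sq hs.le]
    have hsn : Real.sqrt (n : ℝ) ≤ (n : ℝ) + 1 := by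
      have h1 : (n : ℝ) ≤ ((n : ℝ) + 1) ^ 2 := by nlinarith [Nat.cast_nonneg (α := ℝ) n]
      calc Real.sqrt (n : ℝ) ≤ Real.sqrt (((n : ℝ) + 1) ^ 2) := Real.sqrt_le_sqrt h1
        _ = (n : ℝ) + 1 := Real.sqrt_sq (by positivity)
    have hfin : Real.sqrt (n : ℝ) * s ≤ c * τ / 4 := by
      have : ((n : ℝ) + 1) * s = c * τ / 4 := by
        rw [hs_def]; field_simp
      nlinarith [mul_le_mul_of_nonneg_right hsn hs.le]
    calc dist y x ≤ Real.sqrt (n : ℝ) * s := by rw [← hsq]; exact hdle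
      _ ≤ c * τ / 4 := hfin
      _ < c * τ / 2 := by linarith
  -- notation
  set F : EuclideanSpace ℝ (Fin n) → ℝ≥0∞ := fun y =>
    ∫⁻ t in Set.Icc (c * τ) (2 * c * τ), ENNReal.ofReal (‖u (y, t)‖ ^ 2) with hF
  set B : ℝ≥0∞ := ENNReal.ofReal C₀ * ENNReal.ofReal (τ ^ ((n : ℝ) - 1)) with hB
  set V : ℝ≥0∞ := ENNReal.ofReal (s ^ n) with hV
  have hV0 : V ≠ 0 := by
    simp [hV, ENNReal.ofReal_eq_zero, not_le, pow_pos hs]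
  have hVtop : V ≠ ⊤ := ENNReal.ofReal_ne_top
  have hBtop : B ≠ ⊤ := by
    simp [hB, ENNReal.mul_ne_top, ENNReal.ofReal_ne_top]
  set X : (Fin n → ℤ) → ℝ≥0∞ := fun k => ∫⁻ y in Q k, F y with hX
  set G : (Fin n → ℤ) → ℝ≥0∞ := fun k => ∫⁻ x in Q k, lusinTA2 n u x ^ p with hG
  -- per-cube bound via any point of the cube
  have key : ∀ k, ∀ x ∈ Q k, X k ≤ B * lusinTA2 n u x ^ 2 := by
    intro k x hx
    refine le_trans ?_ (hloc x τ hτ)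
    exact lintegral_mono_set fun y hy => hdiam k x hx y hy
  -- integrated over the cube
  have step : ∀ k, V * X k ^ (p / 2) ≤ B ^ (p / 2) * G k := by
    intro k
    have hpt : ∀ x ∈ Q k, X k ^ (p / 2) ≤ B ^ (p / 2) * lusinTA2 n u x ^ p := by
      intro x hx
      have h1 : X k ^ (p / 2) ≤ (B * lusinTA2 n u x ^ 2) ^ (p / 2) :=
        ENNReal.rpow_le_rpow (key k x hx) (by positivity)
      refine h1.trans_eq ?_
      rw [ENNReal.mul_rpow_of_nonneg _ _ (by positivity : (0:ℝ) ≤ p / 2)]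
      congr 1
      rw [← ENNReal.rpow_natCast (lusinTA2 n u x) 2, ← ENNReal.rpow_mul,
        show ((2 : ℕ) : ℝ) * (p / 2) = p by push_cast; ring]
    calc V * X k ^ (p / 2) = ∫⁻ x in Q k, X k ^ (p / 2) := by
          rw [setLIntegral_const, mul_comm, hQvol]
      _ ≤ ∫⁻ x in Q k, B ^ (p / 2) * lusinTA2 n u x ^ p :=
          lintegral_mono_ae ((ae_restrict_iff' (hQmeas k)).2 (ae_of_all _ hpt))
      _ = B ^ (p / 2) * G k := by
          rw [hG, lintegral_const_mul' _ _
            (ENNReal.rpow_ne_top_of_nonneg (by positivity) hBtop)]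
  -- solve for X k
  have cube : ∀ k, X k ≤ B * G k ^ (2 / p) / V ^ (2 / p) := by
    intro k
    have h1 : X k ^ (p / 2) ≤ B ^ (p / 2) * G k / V := by
      rw [ENNReal.le_div_iff_mul_le (Or.inl hV0) (Or.inl hVtop)]
      calc X k ^ (p / 2) * V = V * X k ^ (p / 2) := mul_comm _ _
        _ ≤ B ^ (p / 2) * G k := step k
    have h2 : X k = (X k ^ (p / 2)) ^ (2 / p) := by
      rw [← ENNReal.rpow_mul]
      rw [show p / 2 * (2 / p) = 1 by field_simp]
      exact (ENNReal.rpow_one _).symm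
    rw [h2]
    calc (X k ^ (p / 2)) ^ (2 / p) ≤ (B ^ (p / 2) * G k / V) ^ (2 / p) :=
          ENNReal.rpow_le_rpow h1 (by positivity)
      _ = B * G k ^ (2 / p) / V ^ (2 / p) := by
          rw [ENNReal.div_rpow_of_nonneg _ _ (by positivity : (0:ℝ) ≤ 2 / p),
            ENNReal.mul_rpow_of_nonneg _ _ (by positivity : (0:ℝ) ≤ 2 / p),
            ← ENNReal.rpow_mul]
          rw [show p / 2 * (2 / p) = 1 by field_simp, ENNReal.rpow_one]
  -- sum over cubes
  have hsum_restrict : (volume : Measure (EuclideanSpace ℝ (Fin n))).restrict Set.univ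
      = Measure.sum fun k => volume.restrict (Q k) := by
    rw [← hQcover, Measure.restrict_iUnion hQdisj hQmeas]
  have hXsum : (∫⁻ y, F y) = ∑' k, X k := by
    rw [← setLIntegral_univ, hsum_restrict, lintegral_sum_measure]
  have hGsum : ∑' k, G k = ∫⁻ x, lusinTA2 n u x ^ p := by
    rw [← setLIntegral_univ (f := fun x => lusinTA2 n u x ^ p), hsum_restrict,
      lintegral_sum_measure]
  have hmain : (∫⁻ y, F y) ≤ B * (V ^ (2 / p))⁻¹ * (∫⁻ x, lusinTA2 n u x ^ p) ^ (2 / p) := by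
    rw [hXsum]
    calc ∑' k, X k ≤ ∑' k, B * (V ^ (2 / p))⁻¹ * G k ^ (2 / p) := by
          refine ENNReal.tsum_le_tsum fun k => (cube k).trans_eq ?_
          rw [div_eq_mul_inv]; ring
      _ = B * (V ^ (2 / p))⁻¹ * ∑' k, G k ^ (2 / p) := by rw [ENNReal.tsum_mul_left]
      _ ≤ B * (V ^ (2 / p))⁻¹ * (∑' k, G k) ^ (2 / p) := by
          refine mul_le_mul_right (aux_tsum_rpow G ?_) _
          rw [le_div_iff₀ hp0]; linarith
      _ = B * (V ^ (2 / p))⁻¹ * (∫⁻ x, lusinTA2 n u x ^ p) ^ (2 / p) := by rw [hGsum]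
  refine hmain.trans_eq ?_
  have hVp : V ^ (2 / p) = ENNReal.ofReal (s ^ (2 * (n : ℝ) / p)) := by
    rw [hV, ENNReal.ofReal_rpow_of_pos (pow_pos hs n)]
    congr 1
    rw [← Real.rpow_natCast s n, ← Real.rpow_mul hs.le]
    congr 1
    ring
  rw [hVp, ← ENNReal.ofReal_inv_of_pos (Real.rpow_pos_of_pos hs _),
    ← Real.rpow_neg hs.le]

theorem global_L2_from_area (n : ℕ) (p : ℝ) (hp1 : 1 < p) (hp2 : p ≤ 2)
    (u : EuclideanSpace ℝ (Fin n) × ℝ → ℂ) (hu : Measurable u)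
    (hA : (∫⁻ x, lusinTA2 n u x ^ p) < ⊤)
    (c : ℝ) (hc : 1 ≤ c) (C₀ : ℝ) (hC₀ : 0 ≤ C₀)
    (hloc : ∀ x : EuclideanSpace ℝ (Fin n), ∀ τ : ℝ, 0 < τ →
      (∫⁻ y in {y : EuclideanSpace ℝ (Fin n) | dist y x < c * τ / 2},
          ∫⁻ t in Set.Icc (c * τ) (2 * c * τ), ENNReal.ofReal (‖u (y, t)‖ ^ 2)) ≤
        ENNReal.ofReal C₀ * ENNReal.ofReal (τ ^ ((n : ℝ) - 1)) * (lusinTA2 n u x) ^ 2) :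
    ∃ C : ℝ≥0∞, C ≠ ⊤ ∧ ∀ σ : ℝ, 0 < σ →
      (∫⁻ y, ∫⁻ t in Set.Ioi σ, ENNReal.ofReal (‖u (y, t)‖ ^ 2)) ≤
        C * ENNReal.ofReal (σ ^ ((n : ℝ) - 1 - 2 * n / p)) *
          (∫⁻ x, lusinTA2 n u x ^ p) ^ (2 / p) := by
  classical
  have hp0 : 0 < p := lt_trans one_pos hp1
  have hc0 : 0 < c := lt_of_lt_of_le one_pos hc
  set A := ∫⁻ x, lusinTA2 n u x ^ p with hAdef
  set e : ℝ := (n : ℝ) - 1 - 2 * n / p with he_def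
  have he : e ≤ -1 := by
    have hn : (0:ℝ) ≤ n := Nat.cast_nonneg n
    have h2np : (n:ℝ) ≤ 2 * n / p := by
      rw [le_div_iff₀ hp0]; nlinarith
    rw [he_def]; linarith
  set K : ℝ := c ^ (-((n:ℝ) - 1)) * (4 * ((n:ℝ) + 1)) ^ (2 * (n:ℝ) / p) with hK_def
  have hK0 : 0 ≤ K := by
    rw [hK_def]; positivity
  refine ⟨ENNReal.ofReal C₀ * ENNReal.ofReal K * 2, by
    finiteness, ?_⟩
  intro σ hσ
  have hg : Measurable fun q : EuclideanSpace ℝ (Fin n) × ℝ =>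
      ENNReal.ofReal (‖u q‖ ^ 2) :=
    ENNReal.measurable_ofReal.comp (hu.norm.pow measurable_const)
  -- dyadic decomposition of (σ, ∞)
  have hIoc_disj : Pairwise (Function.onFun Disjoint fun j : ℕ =>
      Set.Ioc ((2:ℝ) ^ j * σ) (2 ^ (j + 1) * σ)) := by
    have hkey : ∀ i j : ℕ, i < j → Disjoint (Set.Ioc ((2:ℝ) ^ i * σ) (2 ^ (i + 1) * σ))
        (Set.Ioc ((2:ℝ) ^ j * σ) (2 ^ (j + 1) * σ)) := by
      intro i j hij
      rw [Set.Ioc_disjoint_Ioc]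
      refine (min_le_left _ _).trans (le_trans ?_ (le_max_right _ _))
      exact mul_le_mul_of_nonneg_right (pow_le_pow_right₀ one_le_two hij) hσ.le
    intro i j hij
    rcases lt_or_gt_of_ne hij with h | h
    · exact hkey i j h
    · exact (hkey j i h).symm
  have hIoi : Set.Ioi σ = ⋃ j : ℕ, Set.Ioc ((2:ℝ) ^ j * σ) (2 ^ (j + 1) * σ) := by
    ext t
    simp only [Set.mem_Ioi, Set.mem_iUnion, Set.mem_Ioc]
    constructor
    · intro ht
      have hex : ∃ m : ℕ, t ≤ 2 ^ (m + 1) * σ := by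
        obtain ⟨m, hm⟩ := pow_unbounded_of_one_lt (t / σ) (one_lt_two (α := ℝ))
        rw [div_lt_iff₀ hσ] at hm
        have h2 : (2:ℝ) ^ m ≤ 2 ^ (m + 1) := pow_le_pow_right₀ one_le_two (Nat.le_succ m)
        exact ⟨m, by nlinarith⟩
      refine ⟨Nat.find hex, ?_, Nat.find_spec hex⟩
      rcases Nat.eq_zero_or_pos (Nat.find hex) with h0 | hpos
      · rw [h0]; simpa using ht
      · have hk : ¬ t ≤ 2 ^ ((Nat.find hex - 1) + 1) * σ :=
          Nat.find_min hex (by omega)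
        push_neg at hk
        have hNat : Nat.find hex - 1 + 1 = Nat.find hex := by omega
        rwa [hNat] at hk
    · rintro ⟨j, h1, h2⟩
      have : (1:ℝ) ≤ 2 ^ j := one_le_pow₀ one_le_two
      nlinarith
  have hdecomp : ∀ y : EuclideanSpace ℝ (Fin n),
      (∫⁻ t in Set.Ioi σ, ENNReal.ofReal (‖u (y, t)‖ ^ 2)) =
      ∑' j : ℕ, ∫⁻ t in Set.Ioc ((2:ℝ) ^ j * σ) (2 ^ (j + 1) * σ),
        ENNReal.ofReal (‖u (y, t)‖ ^ 2) := by
    intro y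
    rw [hIoi, Measure.restrict_iUnion hIoc_disj fun j => measurableSet_Ioc,
      lintegral_sum_measure]
  have hFmeas : ∀ j : ℕ, Measurable fun y : EuclideanSpace ℝ (Fin n) =>
      ∫⁻ t in Set.Ioc ((2:ℝ) ^ j * σ) (2 ^ (j + 1) * σ),
        ENNReal.ofReal (‖u (y, t)‖ ^ 2) := by
    intro j
    exact Measurable.lintegral_prod_right
      (f := fun y t => ENNReal.ofReal (‖u (y, t)‖ ^ 2)) hg
  -- constants comparison at scale j
  have h2e : (2:ℝ) ^ e ≤ 2⁻¹ := by
    have := Real.rpow_le_rpow_of_exponent_le (one_le_two (α := ℝ)) he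
    simpa [Real.rpow_neg_one] using this
  -- per-scale bound
  have hterm : ∀ j : ℕ,
      (∫⁻ y, ∫⁻ t in Set.Ioc ((2:ℝ) ^ j * σ) (2 ^ (j + 1) * σ),
        ENNReal.ofReal (‖u (y, t)‖ ^ 2)) ≤
      ENNReal.ofReal C₀ * ENNReal.ofReal (K * σ ^ e) * A ^ (2 / p) *
        ENNReal.ofReal ((2⁻¹ : ℝ) ^ j) := by
    intro j
    set τ : ℝ := 2 ^ j * σ / c with hτdef
    have hr : (0:ℝ) < 2 ^ j * σ := by positivity
    have hτ : 0 < τ := by rw [hτdef]; positivity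
    have h1 : c * τ = 2 ^ j * σ := by rw [hτdef]; field_simp
    have h2 : 2 * c * τ = 2 ^ (j + 1) * σ := by rw [hτdef]; field_simp; ring
    have hb := scale_bound n p hp1 hp2 u c hc C₀ hloc τ hτ
    rw [← hAdef] at hb
    refine le_trans (le_trans ?_ hb) ?_
    · refine lintegral_mono fun y => lintegral_mono_set ?_
      rw [h1, h2]
      exact Set.Ioc_subset_Icc_self
    -- compare constants
    have hA1 : τ ^ ((n:ℝ) - 1) = (2 ^ j * σ : ℝ) ^ ((n:ℝ) - 1) * c ^ (-((n:ℝ) - 1)) := by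
      rw [hτdef, Real.div_rpow hr.le hc0.le, Real.rpow_neg hc0.le, div_eq_mul_inv]
    have hA2 : (c * τ / (4 * ((n:ℝ) + 1))) ^ (-(2 * (n:ℝ) / p)) =
        (2 ^ j * σ : ℝ) ^ (-(2 * (n:ℝ) / p)) * (4 * ((n:ℝ) + 1)) ^ (2 * (n:ℝ) / p) := by
      rw [h1, Real.div_rpow hr.le (by positivity), Real.rpow_neg (by positivity : (0:ℝ) ≤ 4 * ((n:ℝ) + 1)),
        div_eq_mul_inv, inv_inv]
    have hA3 : (2 ^ j * σ : ℝ) ^ ((n:ℝ) - 1) * (2 ^ j * σ : ℝ) ^ (-(2 * (n:ℝ) / p)) =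
        (2 ^ j * σ : ℝ) ^ e := by
      rw [← Real.rpow_add hr]
      congr 1
    have hA4 : ((2:ℝ) ^ j * σ) ^ e = ((2:ℝ) ^ e) ^ j * σ ^ e := by
      rw [Real.mul_rpow (by positivity) hσ.le]
      congr 1
      rw [← Real.rpow_natCast (2:ℝ) j, ← Real.rpow_mul (by norm_num : (0:ℝ) ≤ 2),
        ← Real.rpow_natCast ((2:ℝ) ^ e) j, ← Real.rpow_mul (by positivity), mul_comm]
    have hA5 : ((2:ℝ) ^ e) ^ j ≤ (2⁻¹ : ℝ) ^ j :=
      pow_le_pow_left₀ (by positivity) h2e j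
    have harith : τ ^ ((n:ℝ) - 1) * (c * τ / (4 * ((n:ℝ) + 1))) ^ (-(2 * (n:ℝ) / p)) ≤
        K * σ ^ e * (2⁻¹ : ℝ) ^ j := by
      have hkey : τ ^ ((n:ℝ) - 1) * (c * τ / (4 * ((n:ℝ) + 1))) ^ (-(2 * (n:ℝ) / p)) =
          K * (((2:ℝ) ^ e) ^ j * σ ^ e) := by
        rw [hA1, hA2, hK_def, ← hA4,
          show (2 ^ j * σ : ℝ) ^ ((n:ℝ) - 1) * c ^ (-((n:ℝ) - 1)) *
              ((2 ^ j * σ : ℝ) ^ (-(2 * (n:ℝ) / p)) * (4 * ((n:ℝ) + 1)) ^ (2 * (n:ℝ) / p)) =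
            c ^ (-((n:ℝ) - 1)) * (4 * ((n:ℝ) + 1)) ^ (2 * (n:ℝ) / p) *
              ((2 ^ j * σ : ℝ) ^ ((n:ℝ) - 1) * (2 ^ j * σ : ℝ) ^ (-(2 * (n:ℝ) / p))) by ring,
          hA3]
      rw [hkey]
      have hσe : (0:ℝ) ≤ σ ^ e := Real.rpow_nonneg hσ.le e
      nlinarith [mul_le_mul_of_nonneg_right hA5 hσe]
    calc ENNReal.ofReal C₀ * ENNReal.ofReal (τ ^ ((n:ℝ) - 1)) *
          ENNReal.ofReal ((c * τ / (4 * ((n:ℝ) + 1))) ^ (-(2 * (n:ℝ) / p))) * A ^ (2 / p)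
        = ENNReal.ofReal C₀ *
            ENNReal.ofReal (τ ^ ((n:ℝ) - 1) * (c * τ / (4 * ((n:ℝ) + 1))) ^ (-(2 * (n:ℝ) / p))) *
            A ^ (2 / p) := by
          rw [mul_assoc (ENNReal.ofReal C₀),
            ← ENNReal.ofReal_mul (Real.rpow_nonneg hτ.le _)]
      _ ≤ ENNReal.ofReal C₀ * ENNReal.ofReal (K * σ ^ e * (2⁻¹ : ℝ) ^ j) * A ^ (2 / p) := by
          gcongr
      _ = ENNReal.ofReal C₀ * ENNReal.ofReal (K * σ ^ e) * A ^ (2 / p) *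
            ENNReal.ofReal ((2⁻¹ : ℝ) ^ j) := by
          rw [ENNReal.ofReal_mul (by positivity)]
          ring
  -- assemble
  calc (∫⁻ y, ∫⁻ t in Set.Ioi σ, ENNReal.ofReal (‖u (y, t)‖ ^ 2))
      = ∑' j : ℕ, ∫⁻ y, ∫⁻ t in Set.Ioc ((2:ℝ) ^ j * σ) (2 ^ (j + 1) * σ),
          ENNReal.ofReal (‖u (y, t)‖ ^ 2) := by
        simp_rw [hdecomp]
        exact lintegral_tsum fun j => (hFmeas j).aemeasurable
    _ ≤ ∑' j : ℕ, ENNReal.ofReal C₀ * ENNReal.ofReal (K * σ ^ e) * A ^ (2 / p) *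
          ENNReal.ofReal ((2⁻¹ : ℝ) ^ j) := ENNReal.tsum_le_tsum hterm
    _ = ENNReal.ofReal C₀ * ENNReal.ofReal (K * σ ^ e) * A ^ (2 / p) *
          ∑' j : ℕ, ENNReal.ofReal ((2⁻¹ : ℝ) ^ j) := ENNReal.tsum_mul_left
    _ = ENNReal.ofReal C₀ * ENNReal.ofReal (K * σ ^ e) * A ^ (2 / p) * 2 := by
        congr 1
        have : ∀ j : ℕ, ENNReal.ofReal ((2⁻¹ : ℝ) ^ j) = (2⁻¹ : ℝ≥0∞) ^ j := by
          intro j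
          rw [ENNReal.ofReal_pow (by norm_num), ENNReal.ofReal_inv_of_pos two_pos,
            ENNReal.ofReal_ofNat]
        simp_rw [this]
        rw [ENNReal.tsum_geometric, ENNReal.one_sub_inv_two, inv_inv]
    _ = ENNReal.ofReal C₀ * ENNReal.ofReal K * 2 * ENNReal.ofReal (σ ^ e) * A ^ (2 / p) := by
        rw [ENNReal.ofReal_mul hK0]
        ring
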